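/- Let m ≥ 1 be a natural number and σ > 0, ℓ > 0 with mσ² < ℓ². Define h : ℝ → ℝ by h(u) = 2mσ²·(1 − (1 + u/(mℓ²))^{−m/2}). Then for every u₀ ≥ 0, the sequence defined by u_n = h(u_{n−1}) satisfies 0 ≤ u_n ≤ (mσ²/ℓ²)ⁿ·u₀ for all n, and in particular u_n tends to 0 as n → ∞. -/

import Mathlib

open Filter

lemma se_aux_one_sub_rpow_le {x q : ℝ} (hx : 0 ≤ x) (hq : 0 ≤ q) :
    1 - (1 + x) ^ (-q) ≤ q * x := by
  have h1 : (0:ℝ) < 1 + x := by linarith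
  have hlog : Real.log (1 + x) ≤ x := by
    have := Real.log_le_sub_one_of_pos h1; linarith
  have hlog0 : 0 ≤ Real.log (1 + x) := Real.log_nonneg (by linarith)
  have hrw : (1 + x) ^ (-q) = Real.exp (-q * Real.log (1 + x)) := by
    rw [Real.rpow_def_of_pos h1]; ring_nf
  rw [hrw]
  nlinarith [Real.add_one_le_exp (-q * Real.log (1 + x)),
    mul_le_mul_of_nonneg_left hlog hq]

/-- Pathology for the squared exponential kernel: if `mσ² < ℓ²`, every orbit of the
recurrence `u_n = 2mσ²(1 − (1 + u_{n−1}/(mℓ²))^{−m/2})` started at `u₀ ≥ 0` satisfies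
`0 ≤ u_n ≤ (mσ²/ℓ²)ⁿ u₀` and tends to `0`. -/
theorem se_recurrence_pathology
    (m : ℕ) (hm : 1 ≤ m) (σ ℓ : ℝ) (hσ : 0 < σ) (hℓ : 0 < ℓ)
    (hcond : (m : ℝ) * σ ^ 2 < ℓ ^ 2)
    (h : ℝ → ℝ)
    (hh : ∀ u : ℝ, h u
      = 2 * (m : ℝ) * σ ^ 2 * (1 - (1 + u / ((m : ℝ) * ℓ ^ 2)) ^ (-(m : ℝ) / 2))) :
    ∀ u₀ ≥ (0 : ℝ), ∀ u : ℕ → ℝ, u 0 = u₀ → (∀ n, u (n + 1) = h (u n)) →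
      (∀ n, 0 ≤ u n ∧ u n ≤ ((m : ℝ) * σ ^ 2 / ℓ ^ 2) ^ n * u₀) ∧
      Tendsto u atTop (nhds 0) := by
  intro u₀ hu₀ u hu0 hrec
  have hm0 : (0:ℝ) < (m:ℝ) := by exact_mod_cast hm
  have hℓ2 : (0:ℝ) < ℓ ^ 2 := by positivity
  have hσ2 : (0:ℝ) < σ ^ 2 := by positivity
  set c : ℝ := (m : ℝ) * σ ^ 2 / ℓ ^ 2 with hc
  have hc0 : 0 ≤ c := by positivity
  have hc1 : c < 1 := (div_lt_one hℓ2).mpr hcond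
  -- key bounds on h
  have key : ∀ v : ℝ, 0 ≤ v → 0 ≤ h v ∧ h v ≤ c * v := by
    intro v hv
    have hx : 0 ≤ v / ((m : ℝ) * ℓ ^ 2) := by positivity
    have h1x : (1:ℝ) ≤ 1 + v / ((m : ℝ) * ℓ ^ 2) := by linarith
    constructor
    · rw [hh]
      have hle1 : (1 + v / ((m : ℝ) * ℓ ^ 2)) ^ (-(m : ℝ) / 2) ≤ 1 :=
        Real.rpow_le_one_of_one_le_of_nonpos h1x (by have := hm0; linarith)
      exact mul_nonneg (by positivity) (by linarith)
    · rw [hh]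
      have hb := se_aux_one_sub_rpow_le hx (q := (m:ℝ)/2) (by positivity)
      have hb' : 1 - (1 + v / ((m : ℝ) * ℓ ^ 2)) ^ (-(m : ℝ) / 2)
          ≤ (m:ℝ)/2 * (v / ((m : ℝ) * ℓ ^ 2)) := by
        rw [show -(m:ℝ)/2 = -((m:ℝ)/2) by ring]; exact hb
      have heq : c * v = 2 * (m : ℝ) * σ ^ 2 * ((m:ℝ)/2 * (v / ((m : ℝ) * ℓ ^ 2))) := by
        rw [hc]; field_simp
      rw [heq]
      exact mul_le_mul_of_nonneg_left hb' (by positivity)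
  have main : ∀ n, 0 ≤ u n ∧ u n ≤ c ^ n * u₀ := by
    intro n
    induction n with
    | zero => simp [hu0, hu₀]
    | succ n ih =>
      obtain ⟨h0, h1⟩ := ih
      obtain ⟨k0, k1⟩ := key (u n) h0
      refine ⟨by rw [hrec]; exact k0, ?_⟩
      rw [hrec]
      calc h (u n) ≤ c * u n := k1
        _ ≤ c * (c ^ n * u₀) := mul_le_mul_of_nonneg_left h1 hc0
        _ = c ^ (n + 1) * u₀ := by ring
  refine ⟨main, ?_⟩
  have htend : Tendsto (fun n => c ^ n * u₀) atTop (nhds 0) := by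
    have := tendsto_pow_atTop_nhds_zero_of_lt_one hc0 hc1
    simpa using this.mul_const u₀
  exact squeeze_zero (fun n => (main n).1) (fun n => (main n).2) htend
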